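/- Let $P$ be a prime ideal of $K[x_{ij}]$ containing $J_{G_1,G_2}$, and let $W=\{(i,j)\in[m]\times[n]: x_{ij}\in P\}$. Then $W$ is an admissible set with respect to $(G_1,G_2)$: whenever $(i,j)\in (e\times f)\cap W$ for some edge $e\in E(G_1)$ and edge $f\in E(G_2)$, either $\{i\}\times f\subset W$ or $e\times\{j\}\subset W$. -/

import Mathlib

open MvPolynomial

/-- The binomial edge ideal of a pair of graphs. -/
noncomputable def pairIdeal (K : Type) [Field K] {α β : Type}
    (G1 : SimpleGraph α) (G2 : SimpleGraph β) : Ideal (MvPolynomial (α × β) K) :=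
  Ideal.span {p | ∃ i j k l, G1.Adj i j ∧ G2.Adj k l ∧
    p = X (i, k) * X (j, l) - X (i, l) * X (j, k)}

/-- `W` is admissible with respect to `(G₁,G₂)`: whenever a point `(a,c)` of a box
`e × f` (with `e = {a,b} ∈ E(G₁)`, `f = {c,d} ∈ E(G₂)`) lies in `W`, then
`{a} × f ⊆ W` or `e × {c} ⊆ W`. -/
def IsAdmissible {α β : Type} (G1 : SimpleGraph α) (G2 : SimpleGraph β)
    (W : Set (α × β)) : Prop :=
  ∀ ⦃a b c d⦄, G1.Adj a b → G2.Adj c d → (a, c) ∈ W → (a, d) ∈ W ∨ (b, c) ∈ W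

/-- If `P` is a prime ideal containing `J_{G₁,G₂}`, then the set of variables in `P`
forms an admissible set. -/
theorem stmt7 (K : Type) [Field K] (m n : ℕ)
    (G1 : SimpleGraph (Fin m)) (G2 : SimpleGraph (Fin n))
    (P : Ideal (MvPolynomial (Fin m × Fin n) K)) (hP : P.IsPrime)
    (hJP : pairIdeal K G1 G2 ≤ P) :
    IsAdmissible G1 G2 {p : Fin m × Fin n | X p ∈ P} := by
  intro a b c d hab hcd hac
  have hbin : X (a, c) * X (b, d) - X (a, d) * X (b, c) ∈ P := by
    apply hJP
    exact Ideal.subset_span ⟨a, b, c, d, hab, hcd, rfl⟩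
  have hmul : X (a, d) * X (b, c) ∈ P := by
    have := P.sub_mem (P.mul_mem_right (X (b, d)) hac) hbin
    simpa using this
  rcases hP.mem_or_mem hmul with h | h
  · exact Or.inl h
  · exact Or.inr h
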